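/- Let n ≥ 1 and let f : ℝⁿ → ℝ be a C¹-smooth convex function such that ∇f(x₀) = 0 for some x₀ ∈ ℝⁿ, and suppose f is C²-smooth and strictly convex on an open neighborhood of x₀. Then f(x) → +∞ as ‖x‖ → +∞. -/

import Mathlib

open Real Gradient Filter

/-- A convex differentiable function with vanishing gradient at `x₀` has a global minimum
at `x₀`. -/
lemma global_min_aux {n : ℕ} {f : EuclideanSpace ℝ (Fin n) → ℝ}
    (hf : ContDiff ℝ 1 f) (hconv : ConvexOn ℝ Set.univ f)
    {x₀ : EuclideanSpace ℝ (Fin n)} (hx₀ : ∇ f x₀ = 0)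
    (y : EuclideanSpace ℝ (Fin n)) : f x₀ ≤ f y := by
  -- consider g t = f (x₀ + t • (y - x₀))
  set g : ℝ → ℝ := fun t => f (x₀ + t • (y - x₀)) with hg
  have hfd : HasFDerivAt f (0 : EuclideanSpace ℝ (Fin n) →L[ℝ] ℝ) x₀ := by
    have h1 : HasGradientAt f (∇ f x₀) x₀ :=
      ((hf.differentiable one_ne_zero) x₀).hasGradientAt
    rw [hx₀] at h1
    have := h1.hasFDerivAt
    simpa using this
  have hline : HasDerivAt (fun t : ℝ => x₀ + t • (y - x₀)) (y - x₀) 0 := by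
    have : HasDerivAt (fun t : ℝ => t • (y - x₀)) (y - x₀) 0 := by
      simpa using (hasDerivAt_id (0:ℝ)).smul_const (y - x₀)
    simpa using this.const_add x₀
  have hgd : HasDerivAt g 0 0 := by
    have hfd' : HasFDerivAt f (0 : EuclideanSpace ℝ (Fin n) →L[ℝ] ℝ)
        (x₀ + (0:ℝ) • (y - x₀)) := by simpa using hfd
    have := hfd'.comp_hasDerivAt 0 hline
    exact this
  have hgconv : ConvexOn ℝ Set.univ g := by
    have := hconv.comp_affineMap
      (AffineMap.lineMap x₀ y : ℝ →ᵃ[ℝ] EuclideanSpace ℝ (Fin n))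
    have hpre : (AffineMap.lineMap x₀ y : ℝ →ᵃ[ℝ] EuclideanSpace ℝ (Fin n)) ⁻¹' Set.univ
        = (Set.univ : Set ℝ) := by simp
    rw [hpre] at this
    have heq : g = f ∘ (AffineMap.lineMap x₀ y : ℝ →ᵃ[ℝ] EuclideanSpace ℝ (Fin n)) := by
      funext t
      simp [hg, AffineMap.lineMap_apply, Function.comp, add_comm]
    rw [heq]; exact this
  have hslope := hgconv.le_slope_of_hasDerivAt (Set.mem_univ 0) (Set.mem_univ 1)
    one_pos hgd
  have h0 : g 0 = f x₀ := by simp [hg]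
  have h1 : g 1 = f y := by simp [hg]
  rw [slope_def_field] at hslope
  simp [h0, h1] at hslope
  linarith [hslope]

theorem stmt_17 (n : ℕ) (hn : 1 ≤ n) (f : EuclideanSpace ℝ (Fin n) → ℝ)
    (hf : ContDiff ℝ 1 f) (hconv : ConvexOn ℝ Set.univ f)
    (x₀ : EuclideanSpace ℝ (Fin n)) (hx₀ : ∇ f x₀ = 0)
    (U : Set (EuclideanSpace ℝ (Fin n))) (hUopen : IsOpen U) (hx₀U : x₀ ∈ U)
    (hfU : ContDiffOn ℝ 2 f U) (hsconv : StrictConvexOn ℝ U f) :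
    Tendsto f (Filter.comap (fun x => ‖x‖) Filter.atTop) Filter.atTop := by
  haveI : Nonempty (Fin n) := ⟨⟨0, hn⟩⟩
  haveI : Nontrivial (EuclideanSpace ℝ (Fin n)) := by
    refine ⟨⟨0, EuclideanSpace.single ⟨0, hn⟩ (1:ℝ), ?_⟩⟩
    intro h
    have := congrArg (fun v => v ⟨0, hn⟩) h
    simp at this
  have hmin : ∀ y, f x₀ ≤ f y := global_min_aux hf hconv hx₀
  -- strict minimum on U
  have hstrict : ∀ y ∈ U, y ≠ x₀ → f x₀ < f y := by
    intro y hy hne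
    have hmid : midpoint ℝ x₀ y ∈ U := by
      have := hsconv.1.segment_subset hx₀U hy (midpoint_mem_segment x₀ y)
      exact this
    have hlt := hsconv.2 hx₀U hy (Ne.symm hne) (by norm_num : (0:ℝ) < 1/2)
      (by norm_num : (0:ℝ) < 1/2) (by norm_num)
    have hmid' : f (midpoint ℝ x₀ y) < (1/2) * f x₀ + (1/2) * f y := by
      simpa [midpoint_eq_smul_add, smul_add] using hlt
    have := hmin (midpoint ℝ x₀ y)
    linarith
  -- choose a closed ball inside U
  obtain ⟨ε, hε, hball⟩ := Metric.isOpen_iff.1 hUopen x₀ hx₀U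
  set r : ℝ := ε / 2 with hr
  have hrpos : 0 < r := by positivity
  have hcb : Metric.closedBall x₀ r ⊆ U := by
    refine subset_trans ?_ hball
    intro z hz
    have : dist z x₀ ≤ ε / 2 := hz
    exact lt_of_le_of_lt this (by linarith)
  -- min of f on the sphere
  have hsph_ne : (Metric.sphere x₀ r).Nonempty :=
    NormedSpace.sphere_nonempty.2 hrpos.le
  have hsph_cpt : IsCompact (Metric.sphere x₀ r) := isCompact_sphere x₀ r
  obtain ⟨z₀, hz₀S, hz₀min⟩ :=
    hsph_cpt.exists_isMinOn hsph_ne (hf.continuous.continuousOn)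
  set m : ℝ := f z₀ with hm
  have hz₀U : z₀ ∈ U := hcb (Metric.sphere_subset_closedBall hz₀S)
  have hz₀ne : z₀ ≠ x₀ := by
    intro h
    rw [h] at hz₀S
    simp [Metric.mem_sphere] at hz₀S
    linarith
  have hmgt : f x₀ < m := hstrict z₀ hz₀U hz₀ne
  set c : ℝ := m - f x₀ with hc
  have hcpos : 0 < c := by simp [hc]; linarith
  -- key bound
  have key : ∀ x : EuclideanSpace ℝ (Fin n), r ≤ ‖x - x₀‖ →
      f x₀ + (‖x - x₀‖ / r) * c ≤ f x := by
    intro x hx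
    set d : ℝ := ‖x - x₀‖ with hd
    have hdpos : 0 < d := lt_of_lt_of_le hrpos hx
    set t : ℝ := r / d with ht
    have htpos : 0 < t := by positivity
    have htle : t ≤ 1 := by
      rw [ht, div_le_one hdpos]; exact hx
    set y : EuclideanSpace ℝ (Fin n) := x₀ + t • (x - x₀) with hy
    have hyS : y ∈ Metric.sphere x₀ r := by
      have : ‖y - x₀‖ = r := by
        rw [hy]
        simp only [add_sub_cancel_left]
        rw [norm_smul]
        simp only [Real.norm_eq_abs, abs_of_pos htpos]
        rw [ht]
        field_simp
        exact hd.symm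
      exact mem_sphere_iff_norm.2 this
    have hym : m ≤ f y := hz₀min hyS
    have hcomb : f y ≤ (1 - t) * f x₀ + t * f x := by
      have := hconv.2 (Set.mem_univ x₀) (Set.mem_univ x)
        (by linarith : (0:ℝ) ≤ 1 - t) htpos.le (by ring)
      have hyeq : (1 - t) • x₀ + t • x = y := by
        rw [hy]
        module
      rw [hyeq] at this
      simpa using this
    -- m ≤ (1-t) f x₀ + t f x ⇒ f x ≥ f x₀ + (m - f x₀)/t
    have h1 : f x₀ + c / t ≤ f x := by
      have hmt : m ≤ (1 - t) * f x₀ + t * f x := le_trans hym hcomb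
      have hft : c ≤ (f x - f x₀) * t := by rw [hc]; nlinarith
      have := (div_le_iff₀ htpos).2 hft
      linarith
    have h2 : (d / r) * c = c / t := by
      rw [ht]; field_simp
    rw [h2]; exact h1
  -- conclude
  rw [tendsto_atTop]
  intro b
  rw [eventually_comap]
  rw [eventually_atTop]
  refine ⟨‖x₀‖ + r + r * max 0 ((b - f x₀) / c), fun R hR x hxR => ?_⟩
  have hxnorm : ‖x₀‖ + r + r * max 0 ((b - f x₀) / c) ≤ ‖x‖ := hxR ▸ hR
  have hxd : r + r * max 0 ((b - f x₀) / c) ≤ ‖x - x₀‖ := by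
    have := norm_sub_norm_le x x₀
    calc r + r * max 0 ((b - f x₀) / c) ≤ ‖x‖ - ‖x₀‖ := by linarith
    _ ≤ ‖x - x₀‖ := by
        have := norm_sub_norm_le x x₀
        linarith
  have hmax0 : 0 ≤ max 0 ((b - f x₀) / c) := le_max_left _ _
  have hxd' : r ≤ ‖x - x₀‖ := by nlinarith
  have hb := key x hxd'
  have hmono : f x₀ + ((r + r * max 0 ((b - f x₀) / c)) / r) * c ≤
      f x₀ + (‖x - x₀‖ / r) * c := by
    gcongr
  have hsimp : (r + r * max 0 ((b - f x₀) / c)) / r = 1 + max 0 ((b - f x₀) / c) := by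
    field_simp
  rw [hsimp] at hmono
  have hmaxb : (b - f x₀) / c ≤ max 0 ((b - f x₀) / c) := le_max_right _ _
  have : b - f x₀ ≤ max 0 ((b - f x₀) / c) * c := (div_le_iff₀ hcpos).1 hmaxb
  nlinarith
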